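/- Let X be a locally finite connected multigraph with minimum degree 2 in which small cycles are dense (there is R > 0 such that every ball B(x,R) contains a cycle) and which is not a cycle. Then ρ(Q) = limsup_{n→∞} q^(n)(x,y)^{1/n} is independent of x and y, and 0 < ρ(Q) ≤ 1. -/

import Mathlib

open scoped BigOperators
open Filter

/-- A multigraph given by its set of *oriented* edges. Each oriented edge `e`
has an initial vertex `tail e = e⁻`, a terminal vertex `head e = e⁺`, and a
reversal `bar e = ě` with `ě ≠ e` (loops are counted twice). Local finiteness
is built in. -/
structure Multigraph where
  V : Type
  E : Type
  tail : E → V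
  head : E → V
  bar : E → E
  bar_bar : ∀ e, bar (bar e) = e
  bar_ne : ∀ e, bar e ≠ e
  head_bar : ∀ e, head (bar e) = tail e
  locFin : ∀ x, {e | tail e = x}.Finite

namespace Multigraph
variable (G : Multigraph)

/-- The degree of a vertex: the number of oriented edges emanating from it. -/
noncomputable def deg (x : G.V) : ℕ := (G.locFin x).toFinset.card

/-- `e → f`: `f` may follow `e` in a non-backtracking walk. -/
def Step (e f : G.E) : Prop := G.tail f = G.head e ∧ f ≠ G.bar e

/-- `e ⇒ f`: there is a non-backtracking walk from `e` to `f`. -/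
def Reach : G.E → G.E → Prop := Relation.ReflTransGen G.Step

/-- One-step transition probabilities of the edge non-backtracking random walk. -/
noncomputable def q (e f : G.E) : ℝ :=
  open Classical in
  if G.Step e f then 1 / ((G.deg (G.head e) : ℝ) - 1) else 0

/-- `n`-step transition probabilities `q_E^(n)` of the edge NBRW. -/
noncomputable def qn (G : Multigraph) : ℕ → G.E → G.E → ℝ
  | 0, e, f => open Classical in if e = f then 1 else 0
  | n + 1, e, f => ∑' g : G.E, qn G n e g * G.q g f

/-- Vertex NBRW transition probabilities:
`q^(n)(x,y) = (1/deg x) ∑_{e⁺=x, f⁺=y} q_E^(n)(e,f)`. -/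
noncomputable def qv (n : ℕ) (x y : G.V) : ℝ :=
  (1 / (G.deg x : ℝ)) *
    ∑' (e : {e : G.E // G.head e = x}) (f : {f : G.E // G.head f = y}),
      G.qn n e.1 f.1

def Adj (x y : G.V) : Prop := ∃ e : G.E, G.tail e = x ∧ G.head e = y

def Connected : Prop := ∀ x y : G.V, Relation.ReflTransGen G.Adj x y

/-- There is a walk of length `n` from `x` to `y`. -/
def WalkLen (G : Multigraph) : ℕ → G.V → G.V → Prop
  | 0, x, y => x = y
  | n + 1, x, y => ∃ z, G.Adj x z ∧ WalkLen G n z y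

/-- Graph distance. -/
noncomputable def dist (x y : G.V) : ℕ := sInf {n | G.WalkLen n x y}

/-- A cycle: a nonempty list of distinct oriented edges, with distinct initial
vertices, such that consecutive edges (cyclically) form non-backtracking steps. -/
def IsCycle (l : List G.E) : Prop :=
  l ≠ [] ∧ l.Nodup ∧ (l.map G.tail).Nodup ∧ List.Chain' G.Step (l ++ l.take 1)

/-- Small cycles are dense: some radius `R` works for every ball. -/
def SmallCyclesDense : Prop :=
  ∃ R : ℕ, ∀ x : G.V, ∃ l : List G.E, G.IsCycle l ∧ ∀ e ∈ l, G.dist x (G.tail e) ≤ R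

/-- `X` is a (finite) cycle graph. -/
def IsCycleGraph : Prop := (Set.univ : Set G.V).Finite ∧ ∀ x, G.deg x = 2

def Bipartite : Prop := ∃ c : G.V → Bool, ∀ e : G.E, c (G.tail e) ≠ c (G.head e)

end Multigraph





namespace Multigraph
variable {G : Multigraph}

lemma tail_bar (e : G.E) : G.tail (G.bar e) = G.head e := by
  have h := G.head_bar (G.bar e)
  rw [G.bar_bar] at h
  exact h.symm

lemma bar_inj : Function.Injective G.bar := by
  intro a b h
  rw [← G.bar_bar a, h, G.bar_bar]

lemma step_bar {e f : G.E} (h : G.Step e f) : G.Step (G.bar f) (G.bar e) := by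
  refine ⟨?_, ?_⟩
  · rw [tail_bar, G.head_bar]; exact h.1.symm
  · rw [G.bar_bar]
    intro hh
    exact h.2 (by rw [← hh])

lemma reach_bar {e f : G.E} (h : G.Reach e f) : G.Reach (G.bar f) (G.bar e) := by
  induction h with
  | refl => exact Relation.ReflTransGen.refl
  | tail _ hstep ih => exact Relation.ReflTransGen.head (step_bar hstep) ih

lemma exists_tail_edge (hdeg : ∀ x, 2 ≤ G.deg x) (x : G.V) : ∃ e : G.E, G.tail e = x := by
  have h : 0 < (G.locFin x).toFinset.card := lt_of_lt_of_le (by norm_num) (hdeg x)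
  obtain ⟨e, he⟩ := Finset.card_pos.1 h
  exact ⟨e, by simpa using (Set.Finite.mem_toFinset _).1 he⟩

lemma exists_head_edge (hdeg : ∀ x, 2 ≤ G.deg x) (x : G.V) : ∃ e : G.E, G.head e = x := by
  obtain ⟨e, he⟩ := exists_tail_edge hdeg x
  exact ⟨G.bar e, by rw [G.head_bar, he]⟩

lemma exists_step (hdeg : ∀ x, 2 ≤ G.deg x) (e : G.E) : ∃ f, G.Step e f := by
  have h : 1 < (G.locFin (G.head e)).toFinset.card := lt_of_lt_of_le (by norm_num) (hdeg _)
  obtain ⟨a, ha, b, hb, hab⟩ := Finset.one_lt_card.1 h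
  rw [Set.Finite.mem_toFinset] at ha hb
  by_cases hc : a = G.bar e
  · exact ⟨b, hb, by rw [← hc]; exact fun h' => hab h'.symm⟩
  · exact ⟨a, ha, hc⟩

end Multigraph

namespace Multigraph
variable {G : Multigraph}

/-- cyclic get -/
def cget (l : List G.E) (hl : 0 < l.length) (i : ℕ) : G.E := l[i % l.length]'(Nat.mod_lt _ hl)

lemma cyc_pos {l : List G.E} (hl : G.IsCycle l) : 0 < l.length :=
  List.length_pos_iff.2 hl.1

lemma cget_congr {l : List G.E} (hl : 0 < l.length) {i j : ℕ}
    (h : i % l.length = j % l.length) : cget l hl i = cget l hl j := by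
  simp only [cget, h]

lemma cget_mod {l : List G.E} (hl : 0 < l.length) (i : ℕ) :
    cget l hl (i % l.length) = cget l hl i :=
  cget_congr hl (Nat.mod_mod_of_dvd _ dvd_rfl)

lemma cget_add_len {l : List G.E} (hl : 0 < l.length) (i : ℕ) :
    cget l hl (i + l.length) = cget l hl i :=
  cget_congr hl (Nat.add_mod_right _ _)

lemma cget_mem {l : List G.E} (hl : 0 < l.length) (i : ℕ) : cget l hl i ∈ l :=
  List.getElem_mem _

lemma cget_of_lt {l : List G.E} (hl : 0 < l.length) {i : ℕ} (h : i < l.length) :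
    cget l hl i = l[i]'h := by
  simp only [cget]
  congr 1
  exact Nat.mod_eq_of_lt h

lemma exists_cget {l : List G.E} (hl : 0 < l.length) {e : G.E} (he : e ∈ l) :
    ∃ i, i < l.length ∧ cget l hl i = e := by
  obtain ⟨i, hi, hg⟩ := List.mem_iff_getElem.1 he
  exact ⟨i, hi, by rw [cget_of_lt hl hi]; exact hg⟩

lemma cyc_step {l : List G.E} (hl : G.IsCycle l) (i : ℕ) :
    G.Step (cget l (cyc_pos hl) i) (cget l (cyc_pos hl) (i + 1)) := by
  have hn : 0 < l.length := cyc_pos hl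
  have hchain := hl.2.2.2
  unfold List.Chain' at hchain
  rw [List.isChain_iff_getElem] at hchain
  have hlen : (l ++ l.take 1).length = l.length + 1 := by
    simp [List.length_take, Nat.min_eq_left hn]
  -- work with j := i % n
  set n := l.length with hn'
  have hj : i % n < n := Nat.mod_lt _ hn
  have key : G.Step (l[i % n]'hj) (l[(i % n + 1) % n]'(Nat.mod_lt _ hn)) := by
    have h := hchain (i % n) (by omega)
    rcases Nat.lt_or_ge (i % n + 1) n with hc | hc
    · have e1 : (l ++ l.take 1)[i % n]'(by omega) = l[i % n]'hj :=
        List.getElem_append_left _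
      have e2 : (l ++ l.take 1)[i % n + 1]'(by omega) = l[i % n + 1]'hc :=
        List.getElem_append_left _
      rw [e1, e2] at h
      have e3 : l[(i % n + 1) % n]'(Nat.mod_lt _ hn) = l[i % n + 1]'hc := by
        congr 1
        exact Nat.mod_eq_of_lt hc
      rw [e3]
      exact h
    · have hc' : i % n + 1 = n := by omega
      have e1 : (l ++ l.take 1)[i % n]'(by omega) = l[i % n]'hj :=
        List.getElem_append_left _
      have e2 : (l ++ l.take 1)[i % n + 1]'(by omega) = l[0]'hn := by
        rw [List.getElem_append_right (by omega)]
        simp [hc', ← hn']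
      rw [e1, e2] at h
      have e3 : l[(i % n + 1) % n]'(Nat.mod_lt _ hn) = l[0]'hn := by
        congr 1
        rw [hc', Nat.mod_self]
      rw [e3]
      exact h
  have r1 : cget l hn i = l[i % n]'hj := rfl
  have r2 : cget l hn (i + 1) = l[(i % n + 1) % n]'(Nat.mod_lt _ hn) := by
    have : (i + 1) % n = (i % n + 1) % n := ((Nat.mod_modEq i n).add_right 1).symm
    simp only [cget, ← hn', this]
  rw [r1, r2]
  exact key

lemma cyc_reach_add {l : List G.E} (hl : G.IsCycle l) (i k : ℕ) :
    G.Reach (cget l (cyc_pos hl) i) (cget l (cyc_pos hl) (i + k)) := by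
  induction k with
  | zero => exact Relation.ReflTransGen.refl
  | succ k ih => exact ih.tail (cyc_step hl (i + k))

lemma cyc_reach {l : List G.E} (hl : G.IsCycle l) {e f : G.E} (he : e ∈ l) (hf : f ∈ l) :
    G.Reach e f := by
  have hn := cyc_pos hl
  obtain ⟨i, hi, rfl⟩ := exists_cget hn he
  obtain ⟨j, hj, rfl⟩ := exists_cget hn hf
  have h := cyc_reach_add hl i (j + l.length - i)
  have : i + (j + l.length - i) = j + l.length := by omega
  rw [this, cget_add_len] at h
  exact h

lemma cyc_head_eq_tail {l : List G.E} (hl : G.IsCycle l) (i : ℕ) :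
    G.head (cget l (cyc_pos hl) i) = G.tail (cget l (cyc_pos hl) (i + 1)) :=
  (cyc_step hl i).1.symm

lemma cyc_head_mem_tails {l : List G.E} (hl : G.IsCycle l) {e : G.E} (he : e ∈ l) :
    G.head e ∈ l.map G.tail := by
  obtain ⟨i, hi, rfl⟩ := exists_cget (cyc_pos hl) he
  rw [cyc_head_eq_tail hl i]
  exact List.mem_map_of_mem (cget_mem _ _)

lemma tails_inj {l : List G.E} (hl : G.IsCycle l) {e₁ e₂ : G.E} (h1 : e₁ ∈ l) (h2 : e₂ ∈ l)
    (h : G.tail e₁ = G.tail e₂) : e₁ = e₂ :=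
  List.inj_on_of_nodup_map hl.2.2.1 h1 h2 h

lemma cyc_bar_not_mem {l : List G.E} (hl : G.IsCycle l) {e : G.E} (he : e ∈ l) :
    G.bar e ∉ l := by
  intro hbar
  obtain ⟨i, hi, rfl⟩ := exists_cget (cyc_pos hl) he
  have hstep := cyc_step hl i
  have : G.tail (G.bar (cget l (cyc_pos hl) i)) = G.tail (cget l (cyc_pos hl) (i + 1)) := by
    rw [tail_bar, cyc_head_eq_tail hl i]
  have heq := tails_inj hl hbar (cget_mem _ _) this
  exact hstep.2 heq.symm

lemma heads_map_eq {l : List G.E} (hl : G.IsCycle l) :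
    l.map G.head = (l.map G.tail).rotate 1 := by
  apply List.ext_get
  · simp [List.length_rotate]
  · intro i h1 h2
    have hn := cyc_pos hl
    have hi : i < l.length := by simpa using h1
    rw [List.get_rotate]
    simp only [List.get_eq_getElem, List.getElem_map, List.length_map]
    have h1' : l[i]'hi = cget l hn i := (cget_of_lt hn hi).symm
    have h2' : ∀ (hh : (i+1) % l.length < l.length), l[(i+1) % l.length]'hh = cget l hn (i+1) := by
      intro hh
      rw [← cget_mod hn (i+1)]
      exact (cget_of_lt hn hh).symm
    rw [h1', h2' (Nat.mod_lt _ hn)]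
    exact cyc_head_eq_tail hl i

lemma heads_nodup {l : List G.E} (hl : G.IsCycle l) : (l.map G.head).Nodup := by
  rw [heads_map_eq hl, List.nodup_rotate]
  exact hl.2.2.1

lemma heads_inj {l : List G.E} (hl : G.IsCycle l) {e₁ e₂ : G.E} (h1 : e₁ ∈ l) (h2 : e₂ ∈ l)
    (h : G.head e₁ = G.head e₂) : e₁ = e₂ :=
  List.inj_on_of_nodup_map (heads_nodup hl) h1 h2 h

lemma cyc_pred {l : List G.E} (hl : G.IsCycle l) {e : G.E} (he : e ∈ l) :
    ∃ p ∈ l, G.Step p e := by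
  obtain ⟨i, hi, rfl⟩ := exists_cget (cyc_pos hl) he
  refine ⟨cget l (cyc_pos hl) (i + l.length - 1), cget_mem _ _, ?_⟩
  have h := cyc_step hl (i + l.length - 1)
  have : i + l.length - 1 + 1 = i + l.length := by omega
  rw [this, cget_add_len] at h
  exact h

end Multigraph

namespace Multigraph
variable {G : Multigraph}

lemma isCycle_of_steps {l : List G.E} (hne : l ≠ []) (h1 : l.Nodup) (h2 : (l.map G.tail).Nodup)
    (hs : ∀ (i : ℕ) (h : i + 1 < l.length), G.Step (l[i]'(by omega)) (l[i+1]'h))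
    (hlast : G.Step (l[l.length - 1]'(by
      have := List.length_pos_iff.2 hne; omega)) (l[0]'(List.length_pos_iff.2 hne))) :
    G.IsCycle l := by
  have hn : 0 < l.length := List.length_pos_iff.2 hne
  refine ⟨hne, h1, h2, ?_⟩
  unfold List.Chain'
  rw [List.isChain_iff_getElem]
  intro i hi
  have hlen : (l ++ l.take 1).length = l.length + 1 := by
    simp [List.length_take, Nat.min_eq_left hn]
  rw [hlen] at hi
  rcases Nat.lt_or_ge (i + 1) l.length with hc | hc
  · have e1 : (l ++ l.take 1)[i]'(by omega) = l[i]'(by omega) := List.getElem_append_left _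
    have e2 : (l ++ l.take 1)[i+1]'(by omega) = l[i+1]'hc := List.getElem_append_left _
    rw [e1, e2]
    exact hs i hc
  · have hc' : i = l.length - 1 := by omega
    have e1 : (l ++ l.take 1)[i]'(by omega) = l[l.length - 1]'(by omega) := by
      rw [List.getElem_append_left]
      congr 1
      omega
    have e2 : (l ++ l.take 1)[i+1]'(by omega) = l[0]'hn := by
      rw [List.getElem_append_right (by omega)]
      simp only [List.getElem_take]
      congr 1
      omega
    rw [e1, e2]
    exact hlast

lemma rev_getElem {l : List G.E} {i : ℕ} (h : i < ((l.map G.bar).reverse).length) :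
    ((l.map G.bar).reverse)[i]'h = G.bar (l[l.length - 1 - i]'(by
      simp only [List.length_reverse, List.length_map] at h; omega)) := by
  rw [List.getElem_reverse]
  simp

lemma cyc_reverse {l : List G.E} (hl : G.IsCycle l) : G.IsCycle ((l.map G.bar).reverse) := by
  have hn := cyc_pos hl
  have hlen : ((l.map G.bar).reverse).length = l.length := by simp
  refine isCycle_of_steps ?_ ?_ ?_ ?_ ?_
  · exact List.ne_nil_of_length_pos (by rw [hlen]; exact hn)
  · exact List.nodup_reverse.2 (hl.2.1.map bar_inj)
  · have : ((l.map G.bar).reverse).map G.tail = (l.map G.head).reverse := by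
      rw [List.map_reverse, List.map_map]
      congr 1
      apply List.map_congr_left
      intro e _
      exact tail_bar e
    rw [this, List.nodup_reverse]
    exact heads_nodup hl
  · intro i h
    rw [hlen] at h
    rw [rev_getElem, rev_getElem]
    apply step_bar
    have key := cyc_step hl (l.length - 1 - (i+1))
    have e1 : l.length - 1 - (i + 1) + 1 = l.length - 1 - i := by omega
    rw [e1] at key
    rw [cget_of_lt hn (by omega), cget_of_lt hn (by omega)] at key
    exact key
  · rw [rev_getElem, rev_getElem]
    apply step_bar
    have key := cyc_step hl (l.length - 1)
    have e1 : l.length - 1 + 1 = l.length := by omega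
    rw [e1] at key
    have e2 : cget l hn l.length = cget l hn 0 := by
      have := cget_add_len hn 0
      simpa using this
    rw [e2] at key
    rw [cget_of_lt hn (by omega), cget_of_lt hn (by omega)] at key
    convert key using 2 <;> first | omega | (rw [hlen]; omega)

lemma mem_rev {l : List G.E} {e : G.E} (he : e ∈ l) : G.bar e ∈ (l.map G.bar).reverse := by
  rw [List.mem_reverse]
  exact List.mem_map_of_mem he

lemma mem_of_mem_rev {l : List G.E} {e : G.E} (he : e ∈ (l.map G.bar).reverse) : G.bar e ∈ l := by
  rw [List.mem_reverse, List.mem_map] at he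
  obtain ⟨a, ha, rfl⟩ := he
  rwa [G.bar_bar]

lemma mem_tails_iff_heads {l : List G.E} (hl : G.IsCycle l) {x : G.V} :
    x ∈ l.map G.tail ↔ x ∈ l.map G.head := by
  rw [heads_map_eq hl, List.mem_rotate]

lemma tails_rev_mem_iff {l : List G.E} (hl : G.IsCycle l) {x : G.V} :
    x ∈ ((l.map G.bar).reverse).map G.tail ↔ x ∈ l.map G.tail := by
  have : ((l.map G.bar).reverse).map G.tail = (l.map G.head).reverse := by
    rw [List.map_reverse, List.map_map]
    congr 1
    apply List.map_congr_left
    intro e _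
    exact tail_bar e
  rw [this, List.mem_reverse, ← mem_tails_iff_heads hl]

end Multigraph

namespace Multigraph
variable {G : Multigraph}

def Zset (G : Multigraph) : Set G.V := {x | ∃ l, G.IsCycle l ∧ x ∈ l.map G.tail}

noncomputable def dZ (G : Multigraph) (x : G.V) : ℕ :=
  sInf {n | ∃ y ∈ G.Zset, G.WalkLen n x y}

lemma adj_symm {x y : G.V} (h : G.Adj x y) : G.Adj y x := by
  obtain ⟨e, h1, h2⟩ := h
  exact ⟨G.bar e, by rw [tail_bar, h2], by rw [G.head_bar, h1]⟩

lemma walklen_snoc : ∀ {n : ℕ} {x y z : G.V}, G.WalkLen n x y → G.Adj y z →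
    G.WalkLen (n + 1) x z := by
  intro n
  induction n with
  | zero =>
    intro x y z h hadj
    cases h
    exact ⟨z, hadj, rfl⟩
  | succ n ih =>
    intro x y z h hadj
    obtain ⟨w, hw, hwalk⟩ := h
    exact ⟨w, hw, ih hwalk hadj⟩

lemma rtg_walklen {x y : G.V} (h : Relation.ReflTransGen G.Adj x y) :
    ∃ n, G.WalkLen n x y := by
  induction h with
  | refl => exact ⟨0, rfl⟩
  | tail _ hadj ih =>
    obtain ⟨n, hn⟩ := ih
    exact ⟨n + 1, walklen_snoc hn hadj⟩

lemma dZ_set_nonempty (hconn : G.Connected) (hz : G.Zset.Nonempty) (x : G.V) :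
    {n | ∃ y ∈ G.Zset, G.WalkLen n x y}.Nonempty := by
  obtain ⟨y, hy⟩ := hz
  obtain ⟨n, hn⟩ := rtg_walklen (hconn x y)
  exact ⟨n, y, hy, hn⟩

lemma dZ_mem (hconn : G.Connected) (hz : G.Zset.Nonempty) (x : G.V) :
    ∃ y ∈ G.Zset, G.WalkLen (G.dZ x) x y :=
  Nat.sInf_mem (dZ_set_nonempty hconn hz x)

lemma dZ_le {x : G.V} {n : ℕ} (h : ∃ y ∈ G.Zset, G.WalkLen n x y) : G.dZ x ≤ n :=
  Nat.sInf_le h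

lemma dZ_zero_of_mem {x : G.V} (h : x ∈ G.Zset) : G.dZ x = 0 :=
  Nat.le_zero.1 (dZ_le ⟨x, h, rfl⟩)

lemma dZ_mem_of_zero (hconn : G.Connected) (hz : G.Zset.Nonempty) {x : G.V}
    (h : G.dZ x = 0) : x ∈ G.Zset := by
  obtain ⟨y, hy, hw⟩ := dZ_mem hconn hz x
  rw [h] at hw
  cases hw
  exact hy

lemma dZ_adj (hconn : G.Connected) (hz : G.Zset.Nonempty) {x y : G.V} (hadj : G.Adj x y) :
    G.dZ x ≤ G.dZ y + 1 := by
  obtain ⟨t, ht, hw⟩ := dZ_mem hconn hz y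
  exact dZ_le ⟨t, ht, y, hadj, hw⟩

lemma dZ_decomp (hconn : G.Connected) (hz : G.Zset.Nonempty) {x : G.V} {m : ℕ}
    (h : G.dZ x = m + 1) : ∃ p : G.E, G.tail p = x ∧ G.dZ (G.head p) = m := by
  obtain ⟨t, ht, hw⟩ := dZ_mem hconn hz x
  rw [h] at hw
  obtain ⟨z, hadj, hwalk⟩ := hw
  obtain ⟨p, hp1, hp2⟩ := hadj
  have h1 : G.dZ z ≤ m := dZ_le ⟨t, ht, hwalk⟩
  have h2 : m ≤ G.dZ z := by
    have := dZ_adj hconn hz (⟨p, hp1, hp2⟩ : G.Adj x z)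
    omega
  exact ⟨p, hp1, by rw [hp2]; omega⟩

lemma dZ_le_R (hconn : G.Connected) {R : ℕ}
    (hcycR : ∀ x : G.V, ∃ l : List G.E, G.IsCycle l ∧ ∀ e ∈ l, G.dist x (G.tail e) ≤ R)
    (x : G.V) : G.dZ x ≤ R := by
  obtain ⟨l, hl, hd⟩ := hcycR x
  obtain ⟨e, he⟩ := List.exists_mem_of_ne_nil _ hl.1
  have hne : {n | G.WalkLen n x (G.tail e)}.Nonempty := rtg_walklen (hconn x (G.tail e))
  have hmem : G.WalkLen (G.dist x (G.tail e)) x (G.tail e) := Nat.sInf_mem hne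
  have : G.dZ x ≤ G.dist x (G.tail e) :=
    dZ_le ⟨G.tail e, ⟨l, hl, List.mem_map_of_mem he⟩, hmem⟩
  exact le_trans this (hd e he)

lemma zset_nonempty {R : ℕ}
    (hcycR : ∀ x : G.V, ∃ l : List G.E, G.IsCycle l ∧ ∀ e ∈ l, G.dist x (G.tail e) ≤ R)
    (x : G.V) : G.Zset.Nonempty := by
  obtain ⟨l, hl, _⟩ := hcycR x
  obtain ⟨e, he⟩ := List.exists_mem_of_ne_nil _ hl.1
  exact ⟨G.tail e, l, hl, List.mem_map_of_mem he⟩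

/-- an edge freshly entering a cycle can be reversed -/
lemma fresh_rev {l : List G.E} {p : G.E} (hl : G.IsCycle l) (h1 : G.head p ∈ l.map G.tail)
    (h2 : p ∉ l) (h3 : G.bar p ∉ l) : G.Reach p (G.bar p) := by
  rw [List.mem_map] at h1
  obtain ⟨c, hc, htc⟩ := h1
  have step1 : G.Step p c := ⟨htc, fun h => h3 (h ▸ hc)⟩
  obtain ⟨d, hd, stepdc⟩ := cyc_pred hl hc
  have hhd : G.head d = G.head p := by rw [← stepdc.1, htc]
  have step2 : G.Step d (G.bar p) := by
    refine ⟨by rw [tail_bar, hhd], fun h => h2 ?_⟩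
    have := congrArg G.bar h
    rw [G.bar_bar, G.bar_bar] at this
    exact this ▸ hd
  exact Relation.ReflTransGen.head step1 ((cyc_reach hl hc hd).tail step2)

lemma cyc_exit (hconn : G.Connected) (hdeg : ∀ x, 2 ≤ G.deg x) (hnc : ¬ G.IsCycleGraph)
    {l : List G.E} (hl : G.IsCycle l) :
    ∃ g, G.tail g ∈ l.map G.tail ∧ g ∉ l ∧ G.bar g ∉ l := by
  by_contra hno
  push_neg at hno
  have hno' : ∀ g : G.E, G.tail g ∈ l.map G.tail → g ∈ l ∨ G.bar g ∈ l := by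
    intro g hg
    by_cases h : g ∈ l
    · exact Or.inl h
    · exact Or.inr (hno g hg h)
  have hclose : ∀ u y : G.V, u ∈ l.map G.tail → G.Adj u y → y ∈ l.map G.tail := by
    intro u y hu hadj
    obtain ⟨h, hth, hhh⟩ := hadj
    rcases hno' h (hth ▸ hu) with hc | hc
    · exact hhh ▸ cyc_head_mem_tails hl hc
    · rw [List.mem_map]
      exact ⟨G.bar h, hc, by rw [tail_bar, hhh]⟩
  obtain ⟨e₀, he₀⟩ := List.exists_mem_of_ne_nil _ hl.1
  have hall : ∀ v : G.V, v ∈ l.map G.tail := by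
    intro v
    have hrt := hconn (G.tail e₀) v
    induction hrt with
    | refl => exact List.mem_map_of_mem he₀
    | tail _ hadj ih => exact hclose _ _ ih hadj
  apply hnc
  constructor
  · exact Set.Finite.subset (l.map G.tail).finite_toSet (fun v _ => hall v)
  · intro v
    classical
    have hv := hall v
    rw [List.mem_map] at hv
    obtain ⟨a, ha, hta⟩ := hv
    obtain ⟨pe, hpe, hsteppe⟩ := cyc_pred hl ha
    have hane : a ≠ G.bar pe := by
      intro h
      exact cyc_bar_not_mem hl ha (by rw [← G.bar_bar pe] at hpe; exact h ▸ hpe)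
    have hset : (G.locFin v).toFinset = {a, G.bar pe} := by
      ext g
      rw [Set.Finite.mem_toFinset]
      simp only [Set.mem_setOf_eq, Finset.mem_insert, Finset.mem_singleton]
      constructor
      · intro hg
        rcases hno' g (by rw [hg]; exact hall v) with hc | hc
        · exact Or.inl (tails_inj hl hc ha (by rw [hg, hta]))
        · right
          have hh : G.head (G.bar g) = G.head pe := by
            rw [G.head_bar, hg, ← hta, hsteppe.1]
          have := heads_inj hl hc hpe hh
          rw [← G.bar_bar g, this]
      · intro hg
        rcases hg with rfl | rfl
        · exact hta
        · rw [tail_bar, ← hsteppe.1, hta]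
    show (G.locFin v).toFinset.card = 2
    rw [hset]
    rw [Finset.card_insert_of_notMem (by simpa using hane), Finset.card_singleton]

end Multigraph

namespace Multigraph
variable {G : Multigraph}

lemma L1 (hconn : G.Connected) (hz : G.Zset.Nonempty) :
    ∀ (d : ℕ) (e : G.E), G.dZ (G.head e) = d → G.head e ∉ G.Zset →
    (∃ g, G.Step e g ∧ G.dZ (G.head g) < d) →
    ∃ f, G.Reach e f ∧ G.head f ∈ G.Zset ∧ G.tail f ∉ G.Zset := by
  intro d
  induction d using Nat.strong_induction_on with
  | _ d ih =>
    intro e hd hez hex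
    obtain ⟨g, hstep, hlt⟩ := hex
    by_cases hg : G.head g ∈ G.Zset
    · exact ⟨g, Relation.ReflTransGen.single hstep, hg, by rw [hstep.1]; exact hez⟩
    · have hd1 : G.dZ (G.head g) ≠ 0 := fun h0 => hg (dZ_mem_of_zero hconn hz h0)
      obtain ⟨m, hm⟩ : ∃ m, G.dZ (G.head g) = m + 1 := ⟨G.dZ (G.head g) - 1, by omega⟩
      obtain ⟨p, htp, hdp⟩ := dZ_decomp hconn hz hm
      have hpne : p ≠ G.bar g := by
        intro hcon
        have hh : G.head p = G.head e := by rw [hcon, G.head_bar, hstep.1]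
        rw [hh, hd] at hdp
        omega
      obtain ⟨f, hrf, h1, h2⟩ := ih (G.dZ (G.head g)) (hd ▸ hlt) g rfl hg
        ⟨p, ⟨htp, hpne⟩, by rw [hdp]; omega⟩
      exact ⟨f, Relation.ReflTransGen.head hstep hrf, h1, h2⟩

lemma F4core (hconn : G.Connected) (hdeg : ∀ x, 2 ≤ G.deg x) (hz : G.Zset.Nonempty)
    {R : ℕ}
    (hcycR : ∀ x : G.V, ∃ l : List G.E, G.IsCycle l ∧ ∀ e ∈ l, G.dist x (G.tail e) ≤ R) :
    ∀ (k : ℕ) (e : G.E), R ≤ G.dZ (G.head e) + k →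
    G.head e ∈ G.Zset ∨ ∃ f, G.Reach e f ∧ G.head f ∈ G.Zset ∧ G.tail f ∉ G.Zset := by
  intro k
  induction k using Nat.strong_induction_on with
  | _ k ih =>
    intro e hk
    by_cases hez : G.head e ∈ G.Zset
    · exact Or.inl hez
    · right
      have hd1 : G.dZ (G.head e) ≠ 0 := fun h0 => hez (dZ_mem_of_zero hconn hz h0)
      by_cases hub : ∃ g, G.Step e g ∧ G.dZ (G.head g) < G.dZ (G.head e)
      · exact L1 hconn hz _ e rfl hez hub
      · obtain ⟨h, hsteph⟩ := exists_step hdeg e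
        have hne : ¬ G.dZ (G.head h) < G.dZ (G.head e) := fun hlt => hub ⟨h, hsteph, hlt⟩
        have hadj : G.Adj (G.head h) (G.head e) :=
          ⟨G.bar h, by rw [tail_bar], by rw [G.head_bar, hsteph.1]⟩
        have hlip : G.dZ (G.head h) ≤ G.dZ (G.head e) + 1 := dZ_adj hconn hz hadj
        rcases Nat.eq_or_lt_of_le hlip with hcase | hcase
        · -- dZ (head h) = dZ (head e) + 1 : recurse
          have hhR : G.dZ (G.head h) ≤ R := dZ_le_R hconn hcycR _
          have hk1 : 1 ≤ k := by omega
          have hrec := ih (k - 1) (by omega) h (by omega)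
          rcases hrec with hcl | ⟨f, hrf, h1, h2⟩
          · exfalso
            have := dZ_zero_of_mem hcl
            omega
          · exact ⟨f, Relation.ReflTransGen.head hsteph hrf, h1, h2⟩
        · -- dZ (head h) = dZ (head e) : h is unblocked
          have heq : G.dZ (G.head h) = G.dZ (G.head e) := by omega
          obtain ⟨m, hm⟩ : ∃ m, G.dZ (G.head h) = m + 1 := ⟨G.dZ (G.head h) - 1, by omega⟩
          obtain ⟨p, htp, hdp⟩ := dZ_decomp hconn hz hm
          have hpne : p ≠ G.bar h := by
            intro hcon
            have hh : G.head p = G.head e := by rw [hcon, G.head_bar, hsteph.1]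
            rw [hh] at hdp
            omega
          have hhz : G.head h ∉ G.Zset := fun hc => by
            have := dZ_zero_of_mem hc
            omega
          obtain ⟨f, hrf, h1, h2⟩ := L1 hconn hz _ h rfl hhz
            ⟨p, ⟨htp, hpne⟩, by rw [hdp]; omega⟩
          exact ⟨f, Relation.ReflTransGen.head hsteph hrf, h1, h2⟩

lemma reach_Zset (hconn : G.Connected) (hdeg : ∀ x, 2 ≤ G.deg x) (hz : G.Zset.Nonempty)
    {R : ℕ}
    (hcycR : ∀ x : G.V, ∃ l : List G.E, G.IsCycle l ∧ ∀ e ∈ l, G.dist x (G.tail e) ≤ R)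
    (e : G.E) :
    G.head e ∈ G.Zset ∨ ∃ f, G.Reach e f ∧ G.head f ∈ G.Zset ∧ G.tail f ∉ G.Zset :=
  F4core hconn hdeg hz hcycR R e (Nat.le_add_left _ _)

lemma arrival_rev {f : G.E} (hfz : G.head f ∈ G.Zset) (hft : G.tail f ∉ G.Zset) :
    G.Reach f (G.bar f) := by
  obtain ⟨l₂, hl₂, hm⟩ := hfz
  have h2 : f ∉ l₂ := fun h => hft ⟨l₂, hl₂, List.mem_map_of_mem h⟩
  have h3 : G.bar f ∉ l₂ := by
    intro h
    have := cyc_head_mem_tails hl₂ h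
    rw [G.head_bar] at this
    exact hft ⟨l₂, hl₂, this⟩
  exact fresh_rev hl₂ hm h2 h3

end Multigraph

namespace Multigraph
variable {G : Multigraph}

lemma cyc_step_pred {l : List G.E} (hl : G.IsCycle l) (j : ℕ) :
    G.Step (cget l (cyc_pos hl) (j + (l.length - 1))) (cget l (cyc_pos hl) j) := by
  have h := cyc_step hl (j + (l.length - 1))
  have hn := cyc_pos hl
  have e1 : j + (l.length - 1) + 1 = j + l.length := by omega
  rw [e1, cget_add_len] at h
  exact h

lemma rider (hconn : G.Connected) (hdeg : ∀ x, 2 ≤ G.deg x) (hnc : ¬ G.IsCycleGraph)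
    (hz : G.Zset.Nonempty) {R : ℕ}
    (hcycR : ∀ x : G.V, ∃ l : List G.E, G.IsCycle l ∧ ∀ e ∈ l, G.dist x (G.tail e) ≤ R)
    {l : List G.E} (hl : G.IsCycle l) {e : G.E} (he : e ∈ l) :
    ∃ f, G.Reach e f ∧ G.Reach f (G.bar f) := by
  obtain ⟨g, hgw, hg1, hg2⟩ := cyc_exit hconn hdeg hnc hl
  rw [List.mem_map] at hgw
  obtain ⟨we, hwe, htwe⟩ := hgw
  obtain ⟨p, hpl, hsp⟩ := cyc_pred hl hwe
  have hhp : G.head p = G.tail g := by rw [← hsp.1, htwe]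
  have hreach_ep : G.Reach e p := cyc_reach hl he hpl
  have step_pg : G.Step p g := by
    refine ⟨hhp.symm, fun h => hg2 ?_⟩
    rw [h, G.bar_bar]
    exact hpl
  by_cases hgz : G.head g ∈ G.Zset
  · obtain ⟨l₁, hl₁, hm₁⟩ := hgz
    by_cases hfresh : g ∉ l₁ ∧ G.bar g ∉ l₁
    · exact ⟨g, hreach_ep.tail step_pg, fresh_rev hl₁ hm₁ hfresh.1 hfresh.2⟩
    · have hgl' : ∃ l', G.IsCycle l' ∧ g ∈ l' := by
        rcases not_and_or.1 hfresh with h | h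
        · exact ⟨l₁, hl₁, not_not.1 h⟩
        · refine ⟨(l₁.map G.bar).reverse, cyc_reverse hl₁, ?_⟩
          have := mem_rev (not_not.1 h)
          rwa [G.bar_bar] at this
      obtain ⟨l', hl', hgl⟩ := hgl'
      have hn' := cyc_pos hl'
      by_cases hp' : p ∈ l'
      · -- CASE I : divergence construction
        have hn := cyc_pos hl
        obtain ⟨i₀, hi₀lt, hi₀⟩ := exists_cget hn hpl
        obtain ⟨i₁, hi₁lt, hi₁⟩ := exists_cget hn' hp'
        obtain ⟨ig, higlt, hig⟩ := exists_cget hn' hgl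
        set n := l.length with hndef
        set n' := l'.length with hn'def
        set A : ℕ → G.E := fun k => cget l hn (i₀ + (n - 1) * k) with hA
        set B : ℕ → G.E := fun k => cget l' hn' (i₁ + (n' - 1) * k) with hB
        have hA0 : A 0 = p := by simp only [hA, Nat.mul_zero, Nat.add_zero, hi₀]
        have hB0 : B 0 = p := by simp only [hB, Nat.mul_zero, Nat.add_zero, hi₁]
        have stepA : ∀ k, G.Step (A (k + 1)) (A k) := by
          intro k
          have e1 : i₀ + (n - 1) * (k + 1) = i₀ + (n - 1) * k + (n - 1) := by
            rw [Nat.mul_succ]; omega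
          have := cyc_step_pred hl (i₀ + (n - 1) * k)
          simp only [hA, e1]
          exact this
        have stepB : ∀ k, G.Step (B (k + 1)) (B k) := by
          intro k
          have e1 : i₁ + (n' - 1) * (k + 1) = i₁ + (n' - 1) * k + (n' - 1) := by
            rw [Nat.mul_succ]; omega
          have := cyc_step_pred hl' (i₁ + (n' - 1) * k)
          simp only [hB, e1]
          exact this
        have hAmem : ∀ k, A k ∈ l := fun k => cget_mem _ _
        have hBmem : ∀ k, B k ∈ l' := fun k => cget_mem _ _
        -- find k with B k = g
        have hBk : B (i₁ + n' - ig) = g := by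
          have hkey : (i₁ + (n' - 1) * (i₁ + n' - ig)) % n' = ig % n' := by
            have hid : i₁ + (n' - 1) * (i₁ + n' - ig) = ig + n' * (i₁ + n' - ig - 1) := by
              have h1 : 1 ≤ n' := hn'
              have h2 : ig < n' := higlt
              have h3 : 1 ≤ i₁ + n' - ig := by omega
              have h4 : ig ≤ i₁ + n' := by omega
              zify [Nat.le_of_lt h2, h1, h3, h4]
              ring
            rw [hid, Nat.add_mul_mod_self_left]
          have hkey2 : (i₁ + (n' - 1) * (i₁ + n' - ig)) % n' = ig % n' := by
            rw [hkey]
          simp only [hB]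
          exact (cget_congr hn' hkey2).trans hig
        have hdiff : ∃ k, A k ≠ B k := by
          refine ⟨i₁ + n' - ig, fun hcon => hg1 ?_⟩
          rw [← hBk, ← hcon]
          exact hAmem _
        classical
        have hfind0 : Nat.find hdiff ≠ 0 := by
          intro h0
          have := Nat.find_spec hdiff
          rw [h0, hA0, hB0] at this
          exact this rfl
        obtain ⟨m, hm⟩ : ∃ m, Nat.find hdiff = m + 1 := ⟨Nat.find hdiff - 1, by omega⟩
        have hshare : A m = B m := by
          have := Nat.find_min hdiff (by omega : m < Nat.find hdiff)
          exact not_not.1 this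
        have hAB : A (m + 1) ≠ B (m + 1) := by
          have := Nat.find_spec hdiff
          rwa [hm] at this
        have hy : G.head (A (m + 1)) = G.head (B (m + 1)) := by
          have e1 : G.head (A (m+1)) = G.tail (A m) := (stepA m).1.symm
          have e2 : G.head (B (m+1)) = G.tail (B m) := (stepB m).1.symm
          rw [e1, e2, hshare]
        have s2 : G.Reach g (B (m + 1)) := cyc_reach hl' hgl (hBmem _)
        have s3 : G.Step (B (m + 1)) (G.bar (A (m + 1))) := by
          refine ⟨by rw [tail_bar, ← hy], fun hcon => hAB (bar_inj hcon)⟩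
        set cw : G.E := cget l hn (i₀ + 1) with hcw
        have s4 : G.Reach (G.bar (A (m + 1))) (G.bar cw) :=
          cyc_reach (cyc_reverse hl) (mem_rev (hAmem _)) (mem_rev (cget_mem _ _))
        have s5 : G.Step (G.bar cw) (G.bar p) := by
          have := cyc_step hl i₀
          rw [hi₀] at this
          exact step_bar this
        have total : G.Reach p (G.bar p) :=
          Relation.ReflTransGen.head step_pg
            (s2.trans (Relation.ReflTransGen.head s3 (s4.tail s5)))
        exact ⟨p, hreach_ep, total⟩
      · -- CASE II
        obtain ⟨q', hq'l, hsq'⟩ := cyc_pred hl' hgl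
        have hq'p : q' ≠ p := fun h => hp' (h ▸ hq'l)
        have step_q' : G.Step q' (G.bar p) := by
          refine ⟨by rw [tail_bar, hhp, hsq'.1], fun hcon => hq'p (bar_inj hcon).symm⟩
        have total : G.Reach p (G.bar p) :=
          Relation.ReflTransGen.head step_pg ((cyc_reach hl' hgl hq'l).tail step_q')
        exact ⟨p, hreach_ep, total⟩
  · rcases reach_Zset hconn hdeg hz hcycR g with hcon | ⟨f, rgf, hfz, hft⟩
    · exact absurd hcon hgz
    · exact ⟨f, (hreach_ep.tail step_pg).trans rgf, arrival_rev hfz hft⟩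

lemma main_rev (hconn : G.Connected) (hdeg : ∀ x, 2 ≤ G.deg x) (hnc : ¬ G.IsCycleGraph)
    (hz : G.Zset.Nonempty) {R : ℕ}
    (hcycR : ∀ x : G.V, ∃ l : List G.E, G.IsCycle l ∧ ∀ e ∈ l, G.dist x (G.tail e) ≤ R)
    (e : G.E) : ∃ f, G.Reach e f ∧ G.Reach f (G.bar f) := by
  by_cases hez : G.head e ∈ G.Zset
  · obtain ⟨l₁, hl₁, hm₁⟩ := hez
    by_cases hfresh : e ∉ l₁ ∧ G.bar e ∉ l₁
    · exact ⟨e, Relation.ReflTransGen.refl, fresh_rev hl₁ hm₁ hfresh.1 hfresh.2⟩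
    · have hel' : ∃ l', G.IsCycle l' ∧ e ∈ l' := by
        rcases not_and_or.1 hfresh with h | h
        · exact ⟨l₁, hl₁, not_not.1 h⟩
        · refine ⟨(l₁.map G.bar).reverse, cyc_reverse hl₁, ?_⟩
          have := mem_rev (not_not.1 h)
          rwa [G.bar_bar] at this
      obtain ⟨l', hl', hel⟩ := hel'
      exact rider hconn hdeg hnc hz hcycR hl' hel
  · rcases reach_Zset hconn hdeg hz hcycR e with hcon | ⟨f, ref, hfz, hft⟩
    · exact absurd hcon hez
    · exact ⟨f, ref, arrival_rev hfz hft⟩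

lemma rev_all (hconn : G.Connected) (hdeg : ∀ x, 2 ≤ G.deg x) (hnc : ¬ G.IsCycleGraph)
    (hz : G.Zset.Nonempty) {R : ℕ}
    (hcycR : ∀ x : G.V, ∃ l : List G.E, G.IsCycle l ∧ ∀ e ∈ l, G.dist x (G.tail e) ≤ R)
    (e : G.E) : G.Reach e (G.bar e) := by
  obtain ⟨f, hef, hf⟩ := main_rev hconn hdeg hnc hz hcycR e
  exact hef.trans (hf.trans (reach_bar hef))

lemma reach_all (hconn : G.Connected) (hdeg : ∀ x, 2 ≤ G.deg x) (hnc : ¬ G.IsCycleGraph)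
    (hz : G.Zset.Nonempty) {R : ℕ}
    (hcycR : ∀ x : G.V, ∃ l : List G.E, G.IsCycle l ∧ ∀ e ∈ l, G.dist x (G.tail e) ≤ R)
    (e f : G.E) : G.Reach e f := by
  have hstep_or : ∀ a b : G.E, G.tail b = G.head a → G.Reach a b := by
    intro a b hab
    by_cases hc : b = G.bar a
    · rw [hc]
      exact rev_all hconn hdeg hnc hz hcycR a
    · exact Relation.ReflTransGen.single ⟨hab, hc⟩
  have hkey : ∀ v : G.V, Relation.ReflTransGen G.Adj (G.head e) v →
      ∃ g, G.Reach e g ∧ G.head g = v := by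
    intro v hv
    induction hv with
    | refl => exact ⟨e, Relation.ReflTransGen.refl, rfl⟩
    | tail _ hadj ih =>
      obtain ⟨g, hg, hgb⟩ := ih
      obtain ⟨h, hth, hhh⟩ := hadj
      exact ⟨h, hg.trans (hstep_or g h (by rw [hth, hgb])), hhh⟩
  obtain ⟨g, hg, hgf⟩ := hkey (G.tail f) (hconn _ _)
  exact hg.trans (hstep_or g f hgf.symm)

end Multigraph

namespace Multigraph
variable {G : Multigraph}

open Classical in
noncomputable def qsupp (G : Multigraph) : ℕ → G.E → Finset G.E
  | 0, e => {e}
  | n + 1, e => (qsupp G n e).biUnion fun g => (G.locFin (G.head g)).toFinset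

lemma deg_cast_pos (hdeg : ∀ x, 2 ≤ G.deg x) (x : G.V) : (0:ℝ) < (G.deg x : ℝ) - 1 := by
  have : (2:ℝ) ≤ (G.deg x : ℝ) := by exact_mod_cast hdeg x
  linarith

lemma q_nonneg (hdeg : ∀ x, 2 ≤ G.deg x) (e f : G.E) : 0 ≤ G.q e f := by
  rw [q]
  split
  · exact div_nonneg zero_le_one (le_of_lt (deg_cast_pos hdeg _))
  · exact le_refl 0

lemma q_pos (hdeg : ∀ x, 2 ≤ G.deg x) {e f : G.E} (h : G.Step e f) : 0 < G.q e f := by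
  rw [q, if_pos h]
  exact div_pos one_pos (deg_cast_pos hdeg _)

lemma q_ne_zero_step {e f : G.E} (h : G.q e f ≠ 0) : G.Step e f := by
  by_contra hc
  rw [q, if_neg hc] at h
  exact h rfl

lemma qn_succ (n : ℕ) (e f : G.E) : G.qn (n+1) e f = ∑' g : G.E, G.qn n e g * G.q g f := rfl

open Classical in
lemma qn_zero (e f : G.E) : G.qn 0 e f = if e = f then 1 else 0 := rfl

lemma qn_not_mem_qsupp : ∀ (n : ℕ) (e f : G.E), f ∉ qsupp G n e → G.qn n e f = 0 := by
  intro n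
  induction n with
  | zero =>
    intro e f hf
    classical
    simp only [qsupp, Finset.mem_singleton] at hf
    rw [qn_zero, if_neg (fun h => hf h.symm)]
  | succ n ih =>
    intro e f hf
    rw [qn_succ]
    have : ∀ g : G.E, G.qn n e g * G.q g f = 0 := by
      intro g
      by_cases hg : g ∈ qsupp G n e
      · by_cases hq : G.q g f = 0
        · rw [hq, mul_zero]
        · exfalso
          apply hf
          simp only [qsupp, Finset.mem_biUnion]
          exact ⟨g, hg, by rw [Set.Finite.mem_toFinset]; exact (q_ne_zero_step hq).1⟩
      · rw [ih e g hg, zero_mul]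
    simp only [this]
    exact tsum_zero

lemma summable_qn_mul (n : ℕ) (e : G.E) (F : G.E → ℝ) :
    Summable (fun g => G.qn n e g * F g) :=
  summable_of_ne_finset_zero (s := qsupp G n e)
    (fun g hg => by rw [qn_not_mem_qsupp n e g hg, zero_mul])

lemma summable_qn (n : ℕ) (e : G.E) : Summable (fun f => G.qn n e f) := by
  have := summable_qn_mul n e (fun _ => 1)
  simpa using this

lemma qn_nonneg (hdeg : ∀ x, 2 ≤ G.deg x) : ∀ (n : ℕ) (e f : G.E), 0 ≤ G.qn n e f := by
  intro n
  induction n with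
  | zero =>
    intro e f
    classical
    rw [qn_zero]
    split <;> norm_num
  | succ n ih =>
    intro e f
    rw [qn_succ]
    exact tsum_nonneg (fun g => mul_nonneg (ih e g) (q_nonneg hdeg g f))

lemma qn_eq_sum (n : ℕ) (e f : G.E) :
    G.qn (n+1) e f = ∑ g ∈ qsupp G n e, G.qn n e g * G.q g f := by
  rw [qn_succ]
  exact tsum_eq_sum (fun g hg => by rw [qn_not_mem_qsupp n e g hg, zero_mul])

lemma le_qn_succ (hdeg : ∀ x, 2 ≤ G.deg x) (n : ℕ) (e g f : G.E) :
    G.qn n e g * G.q g f ≤ G.qn (n+1) e f := by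
  rw [qn_succ]
  exact Summable.le_tsum (summable_qn_mul n e (fun h => G.q h f)) g
    (fun b _ => mul_nonneg (qn_nonneg hdeg n e b) (q_nonneg hdeg b f))

lemma q_row (hdeg : ∀ x, 2 ≤ G.deg x) (g : G.E) : ∑' f : G.E, G.q g f = 1 := by
  classical
  set d := G.deg (G.head g) with hd
  have hd2 : 2 ≤ d := hdeg _
  have hmem : G.bar g ∈ (G.locFin (G.head g)).toFinset := by
    rw [Set.Finite.mem_toFinset]
    exact tail_bar g
  set s := (G.locFin (G.head g)).toFinset.erase (G.bar g) with hs
  have hsupp : ∀ f ∉ s, G.q g f = 0 := by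
    intro f hf
    rw [q, if_neg]
    intro hstep
    apply hf
    rw [hs, Finset.mem_erase]
    exact ⟨hstep.2, by rw [Set.Finite.mem_toFinset]; exact hstep.1⟩
  rw [tsum_eq_sum hsupp]
  have hterm : ∀ f ∈ s, G.q g f = 1 / ((d:ℝ) - 1) := by
    intro f hf
    rw [hs, Finset.mem_erase, Set.Finite.mem_toFinset] at hf
    rw [q, if_pos ⟨hf.2, hf.1⟩]
  rw [Finset.sum_congr rfl hterm, Finset.sum_const]
  rw [hs, Finset.card_erase_of_mem hmem]
  have hcard : (G.locFin (G.head g)).toFinset.card = d := rfl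
  rw [hcard, nsmul_eq_mul]
  have hne : ((d:ℝ) - 1) ≠ 0 := ne_of_gt (deg_cast_pos hdeg _)
  rw [Nat.cast_sub (by omega), Nat.cast_one]
  field_simp

lemma q_row_superset (hdeg : ∀ x, 2 ≤ G.deg x) (g : G.E) {t : Finset G.E}
    (ht : ∀ f, G.q g f ≠ 0 → f ∈ t) : ∑ f ∈ t, G.q g f = 1 := by
  rw [← q_row hdeg g]
  exact (tsum_eq_sum (fun f hf => by_contra (fun hc => hf (ht f hc)))).symm

lemma qn_row (hdeg : ∀ x, 2 ≤ G.deg x) : ∀ (n : ℕ) (e : G.E), ∑' f : G.E, G.qn n e f = 1 := by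
  intro n
  induction n with
  | zero =>
    intro e
    classical
    have : ∀ f : G.E, G.qn 0 e f = if f = e then (1:ℝ) else 0 := by
      intro f
      rw [qn_zero]
      by_cases h : e = f
      · rw [if_pos h, if_pos h.symm]
      · rw [if_neg h, if_neg (fun hc => h hc.symm)]
    simp only [this]
    exact tsum_ite_eq e 1
  | succ n ih =>
    intro e
    have hsupp : ∀ f ∉ qsupp G (n+1) e, G.qn (n+1) e f = 0 :=
      fun f hf => qn_not_mem_qsupp (n+1) e f hf
    rw [tsum_eq_sum hsupp]
    have : ∀ f ∈ qsupp G (n+1) e, G.qn (n+1) e f =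
        ∑ g ∈ qsupp G n e, G.qn n e g * G.q g f := fun f _ => qn_eq_sum n e f
    rw [Finset.sum_congr rfl this, Finset.sum_comm]
    have hinner : ∀ g ∈ qsupp G n e,
        ∑ f ∈ qsupp G (n+1) e, G.qn n e g * G.q g f = G.qn n e g := by
      intro g hg
      rw [← Finset.mul_sum]
      rw [q_row_superset hdeg g (t := qsupp G (n+1) e)]
      · rw [mul_one]
      · intro f hq
        simp only [qsupp, Finset.mem_biUnion]
        exact ⟨g, hg, by rw [Set.Finite.mem_toFinset]; exact (q_ne_zero_step hq).1⟩
    rw [Finset.sum_congr rfl hinner]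
    rw [← tsum_eq_sum (L := .unconditional _) (fun g hg => qn_not_mem_qsupp n e g hg)]
    exact ih e

lemma qn_mul_le (hdeg : ∀ x, 2 ≤ G.deg x) :
    ∀ (n m : ℕ) (e g f : G.E), G.qn m e g * G.qn n g f ≤ G.qn (m + n) e f := by
  intro n
  induction n with
  | zero =>
    intro m e g f
    classical
    rw [qn_zero]
    by_cases h : g = f
    · rw [if_pos h, mul_one, Nat.add_zero, h]
    · rw [if_neg h, mul_zero]
      exact qn_nonneg hdeg _ e f
  | succ n ih =>
    intro m e g f
    rw [qn_succ n g f, ← tsum_mul_left]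
    have hstep1 : ∑' h, G.qn m e g * (G.qn n g h * G.q h f) =
        ∑ h ∈ qsupp G n g, G.qn m e g * (G.qn n g h * G.q h f) := by
      apply tsum_eq_sum
      intro h hh
      rw [qn_not_mem_qsupp n g h hh, zero_mul, mul_zero]
    rw [hstep1]
    have hstep2 : ∑ h ∈ qsupp G n g, G.qn m e g * (G.qn n g h * G.q h f) ≤
        ∑ h ∈ qsupp G n g, G.qn (m + n) e h * G.q h f := by
      apply Finset.sum_le_sum
      intro h _
      rw [← mul_assoc]
      exact mul_le_mul_of_nonneg_right (ih m e g h) (q_nonneg hdeg h f)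
    refine le_trans hstep2 ?_
    have hstep3 : ∑ h ∈ qsupp G n g, G.qn (m + n) e h * G.q h f ≤
        ∑' h, G.qn (m + n) e h * G.q h f := by
      apply Summable.sum_le_tsum
      · intro h _
        exact mul_nonneg (qn_nonneg hdeg _ e h) (q_nonneg hdeg h f)
      · exact summable_qn_mul (m+n) e (fun h => G.q h f)
    refine le_trans hstep3 ?_
    rw [← qn_succ (m+n) e f]
    have : m + (n + 1) = (m + n) + 1 := by omega
    rw [this]

lemma qn_pos_of_reach (hdeg : ∀ x, 2 ≤ G.deg x) {e f : G.E} (h : G.Reach e f) :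
    ∃ n, 0 < G.qn n e f := by
  induction h with
  | refl => exact ⟨0, by classical rw [qn_zero, if_pos rfl]; norm_num⟩
  | tail _ hstep ih =>
    obtain ⟨n, hn⟩ := ih
    refine ⟨n+1, lt_of_lt_of_le (mul_pos hn (q_pos hdeg hstep)) (le_qn_succ hdeg n _ _ _)⟩

end Multigraph

namespace Multigraph
variable {G : Multigraph}

lemma finite_heads (G : Multigraph) (x : G.V) : {e : G.E | G.head e = x}.Finite := by
  have hsub : {e : G.E | G.head e = x} ⊆ G.bar '' {e : G.E | G.tail e = x} := by
    intro e he
    exact ⟨G.bar e, by rw [Set.mem_setOf_eq, tail_bar]; exact he, G.bar_bar e⟩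
  exact Set.Finite.subset ((G.locFin x).image G.bar) hsub

noncomputable instance headFintype (G : Multigraph) (x : G.V) :
    Fintype {e : G.E // G.head e = x} :=
  (finite_heads G x).fintype

noncomputable instance tailFintype (G : Multigraph) (x : G.V) :
    Fintype {e : G.E // G.tail e = x} :=
  (G.locFin x).fintype

lemma card_heads (G : Multigraph) (x : G.V) :
    Fintype.card {e : G.E // G.head e = x} = G.deg x := by
  have hequiv : {e : G.E // G.head e = x} ≃ {e : G.E // G.tail e = x} :=
    { toFun := fun e => ⟨G.bar e.1, by rw [tail_bar, e.2]⟩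
      invFun := fun e => ⟨G.bar e.1, by rw [G.head_bar, e.2]⟩
      left_inv := fun e => by simp [G.bar_bar]
      right_inv := fun e => by simp [G.bar_bar] }
  rw [Fintype.card_congr hequiv]
  haveI : Fintype ↥{e : G.E | G.tail e = x} := tailFintype G x
  show Fintype.card {e : G.E // G.tail e = x} = (G.locFin x).toFinset.card
  rw [Set.Finite.card_toFinset (G.locFin x)]
  exact Fintype.card_congr (Equiv.cast rfl)

lemma qv_eq (n : ℕ) (x y : G.V) :
    G.qv n x y = (1 / (G.deg x : ℝ)) *
      ∑ u : {e : G.E // G.head e = x}, ∑ v : {f : G.E // G.head f = y}, G.qn n u.1 v.1 := by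
  rw [qv]
  congr 1
  rw [tsum_fintype]
  apply Finset.sum_congr rfl
  intro u _
  rw [tsum_fintype]

lemma qv_nonneg (hdeg : ∀ x, 2 ≤ G.deg x) (n : ℕ) (x y : G.V) : 0 ≤ G.qv n x y := by
  rw [qv_eq]
  apply mul_nonneg
  · positivity
  · apply Finset.sum_nonneg
    intro u _
    exact Finset.sum_nonneg (fun v _ => qn_nonneg hdeg n u.1 v.1)

lemma subtype_tsum_le (hdeg : ∀ x, 2 ≤ G.deg x) (n : ℕ) (e : G.E) (y : G.V) :
    ∑ v : {f : G.E // G.head f = y}, G.qn n e v.1 ≤ 1 := by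
  have h1 : ∑ v : {f : G.E // G.head f = y}, G.qn n e v.1 =
      ∑' v : {f : G.E // G.head f = y}, G.qn n e v.1 := (tsum_fintype _).symm
  have h1b : ∑' v : {f : G.E // G.head f = y}, G.qn n e v.1 =
      ∑' f : G.E, ({f : G.E | G.head f = y}).indicator (fun f => G.qn n e f) f :=
    tsum_subtype {f : G.E | G.head f = y} (fun f => G.qn n e f)
  rw [h1, h1b]
  have h2 : ∑' f : G.E, ({f : G.E | G.head f = y}).indicator (fun f => G.qn n e f) f ≤
      ∑' f : G.E, G.qn n e f := by
    apply Summable.tsum_le_tsum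
    · intro f
      exact Set.indicator_le_self' (fun f _ => qn_nonneg hdeg n e f) f
    · apply summable_of_ne_finset_zero (s := qsupp G n e)
      intro f hf
      by_cases hmem : f ∈ {f : G.E | G.head f = y}
      · rw [Set.indicator_of_mem hmem]
        exact qn_not_mem_qsupp n e f hf
      · rw [Set.indicator_of_notMem hmem]
    · exact summable_qn n e
  rw [qn_row hdeg n e] at h2
  exact h2

lemma qv_le_one (hdeg : ∀ x, 2 ≤ G.deg x) (n : ℕ) (x y : G.V) : G.qv n x y ≤ 1 := by
  rw [qv_eq]
  have hb : ∑ u : {e : G.E // G.head e = x}, ∑ v : {f : G.E // G.head f = y}, G.qn n u.1 v.1 ≤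
      (G.deg x : ℝ) := by
    have := Finset.sum_le_card_nsmul Finset.univ
      (fun u : {e : G.E // G.head e = x} => ∑ v : {f : G.E // G.head f = y}, G.qn n u.1 v.1)
      1 (fun u _ => subtype_tsum_le hdeg n u.1 y)
    simp only [nsmul_eq_mul, mul_one] at this
    refine le_trans this ?_
    rw [Finset.card_univ, card_heads]
  rcases Nat.eq_zero_or_pos (G.deg x) with h0 | hpos
  · exfalso; have := hdeg x; omega
  · have hdx : (0:ℝ) < (G.deg x : ℝ) := by exact_mod_cast hpos
    calc (1 / (G.deg x : ℝ)) * ∑ u : {e : G.E // G.head e = x},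
          ∑ v : {f : G.E // G.head f = y}, G.qn n u.1 v.1
        ≤ (1 / (G.deg x : ℝ)) * (G.deg x : ℝ) := by
          apply mul_le_mul_of_nonneg_left hb
          positivity
      _ = 1 := by field_simp

lemma qv_pair_lower (hdeg : ∀ x, 2 ≤ G.deg x) (n : ℕ) {x y : G.V} {e f : G.E}
    (he : G.head e = x) (hf : G.head f = y) :
    (1 / (G.deg x : ℝ)) * G.qn n e f ≤ G.qv n x y := by
  rw [qv_eq]
  apply mul_le_mul_of_nonneg_left _ (by positivity)
  have h1 : G.qn n e f ≤ ∑ v : {f : G.E // G.head f = y}, G.qn n e v.1 := by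
    have := Finset.single_le_sum (f := fun v : {f : G.E // G.head f = y} => G.qn n e v.1)
      (fun v _ => qn_nonneg hdeg n e v.1) (Finset.mem_univ ⟨f, hf⟩)
    exact this
  refine le_trans h1 ?_
  exact Finset.single_le_sum
    (f := fun u : {e : G.E // G.head e = x} => ∑ v : {f : G.E // G.head f = y}, G.qn n u.1 v.1)
    (fun u _ => Finset.sum_nonneg (fun v _ => qn_nonneg hdeg n u.1 v.1))
    (Finset.mem_univ ⟨e, he⟩)

end Multigraph

section Analysis
open Filter Real Topology

lemma root_limsup_le {a b : ℕ → ℝ} (ha0 : ∀ n, 0 ≤ a n) (ha1 : ∀ n, a n ≤ 1)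
    (hb0 : ∀ n, 0 ≤ b n) (hb1 : ∀ n, b n ≤ 1)
    {ι : Type} (s : Finset ι) (Cf : ι → ℝ) (df : ι → ℕ) (hCf : ∀ j ∈ s, 0 ≤ Cf j)
    (hab : ∀ n, a n ≤ ∑ j ∈ s, Cf j * b (n + df j)) :
    limsup (fun n : ℕ => a n ^ ((n:ℝ)⁻¹)) atTop ≤
      limsup (fun n : ℕ => b n ^ ((n:ℝ)⁻¹)) atTop := by
  set A' := fun n : ℕ => a n ^ ((n:ℝ)⁻¹) with hA'
  set B' := fun n : ℕ => b n ^ ((n:ℝ)⁻¹) with hB'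
  have hA0 : ∀ n, 0 ≤ A' n := fun n => Real.rpow_nonneg (ha0 n) _
  have hA1 : ∀ n, A' n ≤ 1 := fun n => Real.rpow_le_one (ha0 n) (ha1 n) (by positivity)
  have hB0 : ∀ n, 0 ≤ B' n := fun n => Real.rpow_nonneg (hb0 n) _
  have hB1 : ∀ n, B' n ≤ 1 := fun n => Real.rpow_le_one (hb0 n) (hb1 n) (by positivity)
  have hBbdd : IsBoundedUnder (· ≤ ·) atTop B' := isBoundedUnder_of ⟨1, hB1⟩
  have hAcob : IsCoboundedUnder (· ≤ ·) atTop A' :=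
    (isBoundedUnder_of ⟨0, hA0⟩ : IsBoundedUnder (· ≥ ·) atTop A').isCoboundedUnder_le
  set L := limsup B' atTop with hL
  have hL0 : 0 ≤ L := le_limsup_of_frequently_le (Frequently.of_forall hB0) hBbdd
  apply le_of_forall_pos_le_add
  intro ε hε
  by_cases ht1 : 1 ≤ L + ε / 2
  · have h1 : limsup A' atTop ≤ 1 := limsup_le_of_le hAcob (Eventually.of_forall hA1)
    linarith
  · push_neg at ht1
    set t := L + ε / 2 with htdef
    have ht0 : 0 < t := by
      have : 0 < ε / 2 := by linarith
      simp only [htdef]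
      linarith
    have hev : ∀ᶠ m in atTop, B' m < t :=
      eventually_lt_of_limsup_lt (by simp only [htdef]; linarith) hBbdd
    obtain ⟨N, hN⟩ := eventually_atTop.1 hev
    have hbm : ∀ m, N + 1 ≤ m → b m ≤ t ^ m := by
      intro m hm
      have h1 : B' m < t := hN m (by omega)
      have hm0 : ((m:ℕ):ℝ) ≠ 0 := by
        have : 0 < m := by omega
        positivity
      have hrw : b m = (b m ^ ((m:ℝ)⁻¹)) ^ m := by
        rw [← Real.rpow_natCast (b m ^ ((m:ℝ)⁻¹)) m, ← Real.rpow_mul (hb0 m),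
          inv_mul_cancel₀ hm0, Real.rpow_one]
      rw [hrw]
      exact pow_le_pow_left₀ (Real.rpow_nonneg (hb0 m) _) (le_of_lt h1) m
    set K := (∑ j ∈ s, Cf j * t ^ (df j)) + 1 with hKdef
    have hsum0 : 0 ≤ ∑ j ∈ s, Cf j * t ^ (df j) :=
      Finset.sum_nonneg (fun j hj => mul_nonneg (hCf j hj) (pow_nonneg (le_of_lt ht0) _))
    have hK0 : 0 < K := by simp only [hKdef]; linarith
    have han : ∀ n, N + 1 ≤ n → a n ≤ K * t ^ n := by
      intro n hn
      refine le_trans (hab n) ?_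
      have hterm : ∀ j ∈ s, Cf j * b (n + df j) ≤ Cf j * (t ^ (df j) * t ^ n) := by
        intro j hj
        apply mul_le_mul_of_nonneg_left _ (hCf j hj)
        have h1 := hbm (n + df j) (by omega)
        rw [pow_add, mul_comm] at h1
        exact h1
      calc ∑ j ∈ s, Cf j * b (n + df j) ≤ ∑ j ∈ s, Cf j * (t ^ (df j) * t ^ n) :=
            Finset.sum_le_sum hterm
        _ = (∑ j ∈ s, Cf j * t ^ (df j)) * t ^ n := by
            rw [Finset.sum_mul]
            apply Finset.sum_congr rfl
            intro j _
            ring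
        _ ≤ K * t ^ n := by
            apply mul_le_mul_of_nonneg_right _ (pow_nonneg (le_of_lt ht0) n)
            simp only [hKdef]
            linarith
    have hAn : ∀ n, N + 1 ≤ n → A' n ≤ K ^ ((n:ℝ)⁻¹) * t := by
      intro n hn
      have hn0 : ((n:ℕ):ℝ) ≠ 0 := by
        have : 0 < n := by omega
        positivity
      have h1 : A' n ≤ (K * t ^ n) ^ ((n:ℝ)⁻¹) :=
        Real.rpow_le_rpow (ha0 n) (han n hn) (by positivity)
      have h2 : (K * t ^ n) ^ ((n:ℝ)⁻¹) = K ^ ((n:ℝ)⁻¹) * (t ^ n) ^ ((n:ℝ)⁻¹) :=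
        Real.mul_rpow (le_of_lt hK0) (pow_nonneg (le_of_lt ht0) n)
      have h3 : ((t:ℝ) ^ n) ^ ((n:ℝ)⁻¹) = t := by
        rw [← Real.rpow_natCast t n, ← Real.rpow_mul (le_of_lt ht0),
          mul_inv_cancel₀ hn0, Real.rpow_one]
      rw [h2, h3] at h1
      exact h1
    have htend : Tendsto (fun n : ℕ => K ^ ((n:ℝ)⁻¹) * t) atTop (𝓝 t) := by
      have h1 : Tendsto (fun n : ℕ => ((n:ℝ))⁻¹) atTop (𝓝 0) :=
        tendsto_inv_atTop_zero.comp tendsto_natCast_atTop_atTop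
      have h2 : Tendsto (fun n : ℕ => K ^ ((n:ℝ)⁻¹)) atTop (𝓝 1) := by
        have hrw : ∀ x : ℝ, K ^ x = Real.exp (Real.log K * x) := fun x =>
          Real.rpow_def_of_pos hK0 x
        simp only [hrw]
        have h3 : Tendsto (fun n : ℕ => Real.log K * ((n:ℝ))⁻¹) atTop (𝓝 0) := by
          have := h1.const_mul (Real.log K)
          simpa using this
        have h4 := (Real.continuous_exp.tendsto 0).comp h3
        simpa [Function.comp_def] using h4
      have := h2.mul_const t
      simpa using this
    have hlim : limsup A' atTop ≤ limsup (fun n : ℕ => K ^ ((n:ℝ)⁻¹) * t) atTop :=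
      limsup_le_limsup (eventually_atTop.2 ⟨N + 1, hAn⟩) hAcob htend.isBoundedUnder_le
    rw [htend.limsup_eq] at hlim
    simp only [htdef] at hlim
    linarith

end Analysis

namespace Multigraph
variable {G : Multigraph}

lemma qn_le_one (hdeg : ∀ x, 2 ≤ G.deg x) (n : ℕ) (e f : G.E) : G.qn n e f ≤ 1 := by
  have h := Summable.le_tsum (summable_qn n e) f (fun b _ => qn_nonneg hdeg n e b)
  rw [qn_row hdeg n e] at h
  exact h

end Multigraph



open Multigraph in
/-- If small cycles are dense in a locally finite connected
multigraph with minimum degree 2 that is not a cycle, then the spectral radius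
`ρ(Q) = limsup_n q^(n)(x,y)^{1/n}` is independent of `x, y`, and `0 < ρ(Q) ≤ 1`. -/
theorem nbrw_spectral_radius_well_defined (G : Multigraph)
    (hconn : G.Connected) (hdeg : ∀ x, 2 ≤ G.deg x)
    (hcyc : G.SmallCyclesDense) (hnc : ¬ G.IsCycleGraph) :
    ∃ ρ : ℝ, 0 < ρ ∧ ρ ≤ 1 ∧
      ∀ x y : G.V,
        Filter.limsup (fun n : ℕ => G.qv n x y ^ ((n : ℝ)⁻¹)) Filter.atTop = ρ := by
  classical
  obtain ⟨R, hcycR⟩ := hcyc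
  -- V is nonempty
  have hV : Nonempty G.V := by
    by_contra h
    apply hnc
    constructor
    · have : (Set.univ : Set G.V) = ∅ := Set.univ_eq_empty_iff.2 (not_nonempty_iff.1 h)
      rw [this]
      exact Set.finite_empty
    · intro x
      exact absurd (Nonempty.intro x) h
  obtain ⟨x₀⟩ := hV
  have hz : G.Zset.Nonempty := zset_nonempty hcycR x₀
  have reachAll : ∀ e f : G.E, G.Reach e f := reach_all hconn hdeg hnc hz hcycR
  set L : G.V → G.V → ℝ :=
    fun x y => Filter.limsup (fun n : ℕ => G.qv n x y ^ ((n : ℝ)⁻¹)) Filter.atTop with hLdef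
  -- the comparison lemma
  have hLE : ∀ x y x' y' : G.V, L x y ≤ L x' y' := by
    intro x y x' y'
    obtain ⟨e', he'⟩ := exists_head_edge hdeg x'
    obtain ⟨f', hf'⟩ := exists_head_edge hdeg y'
    set ι := {e : G.E // G.head e = x} × {f : G.E // G.head f = y} with hι
    have hDx : (0:ℝ) < (G.deg x : ℝ) := by
      have := hdeg x; exact_mod_cast by omega
    have hDx' : (0:ℝ) < (G.deg x' : ℝ) := by
      have := hdeg x'; exact_mod_cast by omega
    set na : ι → ℕ := fun j => Classical.choose (qn_pos_of_reach hdeg (reachAll e' j.1.1))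
      with hna_def
    have hna : ∀ j : ι, 0 < G.qn (na j) e' j.1.1 :=
      fun j => Classical.choose_spec (qn_pos_of_reach hdeg (reachAll e' j.1.1))
    set nb : ι → ℕ := fun j => Classical.choose (qn_pos_of_reach hdeg (reachAll j.2.1 f'))
      with hnb_def
    have hnb : ∀ j : ι, 0 < G.qn (nb j) j.2.1 f' :=
      fun j => Classical.choose_spec (qn_pos_of_reach hdeg (reachAll j.2.1 f'))
    set df : ι → ℕ := fun j => na j + nb j with hdf
    set Cf : ι → ℝ := fun j =>
      (1 / (G.deg x : ℝ)) * ((G.deg x' : ℝ) / (G.qn (na j) e' j.1.1 * G.qn (nb j) j.2.1 f'))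
      with hCf_def
    have hCf : ∀ j ∈ (Finset.univ : Finset ι), 0 ≤ Cf j := by
      intro j _
      have h1 := hna j
      have h2 := hnb j
      simp only [hCf_def]
      positivity
    have hab : ∀ n : ℕ, G.qv n x y ≤ ∑ j ∈ (Finset.univ : Finset ι),
        Cf j * G.qv (n + df j) x' y' := by
      intro n
      have h0 : G.qv n x y = ∑ j : ι, (1 / (G.deg x : ℝ)) * G.qn n j.1.1 j.2.1 := by
        rw [qv_eq, Finset.mul_sum, Fintype.sum_prod_type]
        apply Finset.sum_congr rfl
        intro u _
        rw [Finset.mul_sum]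
      rw [h0]
      apply Finset.sum_le_sum
      intro j _
      set A := G.qn (na j) e' j.1.1 with hA
      set B := G.qn (nb j) j.2.1 f' with hB
      set Q := G.qn n j.1.1 j.2.1 with hQ
      set P := G.qv (n + df j) x' y' with hP
      have hApos := hna j
      have hBpos := hnb j
      have hQ0 : 0 ≤ Q := qn_nonneg hdeg _ _ _
      have hq1 : Q * B ≤ G.qn (n + nb j) j.1.1 f' := qn_mul_le hdeg (nb j) n j.1.1 j.2.1 f'
      have hq2 : A * G.qn (n + nb j) j.1.1 f' ≤ G.qn (na j + (n + nb j)) e' f' :=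
        qn_mul_le hdeg (n + nb j) (na j) e' j.1.1 f'
      have hq3 : (1 / (G.deg x' : ℝ)) * G.qn (na j + (n + nb j)) e' f' ≤
          G.qv (na j + (n + nb j)) x' y' := qv_pair_lower hdeg _ he' hf'
      have hidx : na j + (n + nb j) = n + df j := by simp only [hdf]; omega
      rw [hidx] at hq3 hq2
      have h4 : (1 / (G.deg x' : ℝ)) * (A * (Q * B)) ≤ P := by
        refine le_trans ?_ hq3
        apply mul_le_mul_of_nonneg_left _ (by positivity)
        exact le_trans (mul_le_mul_of_nonneg_left hq1 (le_of_lt hApos)) hq2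
      have h5 : A * (Q * B) ≤ (G.deg x' : ℝ) * P := by
        have h := mul_le_mul_of_nonneg_left h4 (le_of_lt hDx')
        rw [← mul_assoc, mul_one_div, div_self (ne_of_gt hDx'), one_mul] at h
        exact h
      have h6 : Q ≤ ((G.deg x' : ℝ) / (A * B)) * P := by
        rw [div_mul_eq_mul_div, le_div_iff₀ (mul_pos hApos hBpos)]
        calc Q * (A * B) = A * (Q * B) := by ring
          _ ≤ (G.deg x' : ℝ) * P := h5
      calc (1 / (G.deg x : ℝ)) * Q ≤ (1 / (G.deg x : ℝ)) * (((G.deg x' : ℝ) / (A * B)) * P) :=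
            mul_le_mul_of_nonneg_left h6 (by positivity)
        _ = Cf j * P := by simp only [hCf_def]; ring
    exact root_limsup_le (fun n => qv_nonneg hdeg n x y) (fun n => qv_le_one hdeg n x y)
      (fun n => qv_nonneg hdeg n x' y') (fun n => qv_le_one hdeg n x' y')
      Finset.univ Cf df hCf hab
  -- positivity at a cycle vertex
  obtain ⟨l, hl, _⟩ := hcycR x₀
  have hn := cyc_pos hl
  set e₀ := cget l hn 0 with he₀def
  set xs := G.head e₀ with hxs
  set nc := l.length with hnc_len
  set δ := G.qn nc e₀ e₀ with hδdef
  have hδpos : 0 < δ := by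
    have hchain : ∀ k : ℕ, 0 < G.qn k e₀ (cget l hn k) := by
      intro k
      induction k with
      | zero => rw [he₀def, qn_zero, if_pos rfl]; norm_num
      | succ k ih =>
        have hq := q_pos hdeg (cyc_step hl k)
        exact lt_of_lt_of_le (mul_pos ih hq) (le_qn_succ hdeg k e₀ _ _)
    have := hchain nc
    have hc : cget l hn nc = e₀ := by
      rw [he₀def]
      have := cget_add_len hn 0
      simpa using this
    rwa [hc] at this
  have hδ1 : δ ≤ 1 := qn_le_one hdeg _ _ _
  have hpow : ∀ k : ℕ, δ ^ k ≤ G.qn (k * nc) e₀ e₀ := by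
    intro k
    induction k with
    | zero => rw [pow_zero, Nat.zero_mul, qn_zero, if_pos rfl]
    | succ k ih =>
      have h1 : δ ^ (k+1) = δ ^ k * δ := by ring
      have h2 : δ ^ k * δ ≤ G.qn (k * nc) e₀ e₀ * δ :=
        mul_le_mul_of_nonneg_right ih (le_of_lt hδpos)
      have h3 : G.qn (k * nc) e₀ e₀ * G.qn nc e₀ e₀ ≤ G.qn (k * nc + nc) e₀ e₀ :=
        qn_mul_le hdeg nc (k * nc) e₀ e₀ e₀
      have h4 : (k + 1) * nc = k * nc + nc := by ring
      rw [h1, h4]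
      exact le_trans h2 h3
  have hqvlow : ∀ k : ℕ, (1 / (G.deg xs : ℝ)) * δ ^ k ≤ G.qv (k * nc) xs xs := by
    intro k
    refine le_trans ?_ (qv_pair_lower hdeg (k * nc) (e := e₀) (f := e₀) rfl rfl)
    apply mul_le_mul_of_nonneg_left (hpow k)
    positivity
  have hDs : (0:ℝ) < (G.deg xs : ℝ) := by
    have := hdeg xs; exact_mod_cast by omega
  have hDs1 : 1 / (G.deg xs : ℝ) ≤ 1 := by
    rw [div_le_one hDs]
    have := hdeg xs
    exact_mod_cast by omega
  set c : ℝ := (1 / (G.deg xs : ℝ)) ^ ((nc : ℝ)⁻¹) * δ ^ ((nc : ℝ)⁻¹) with hcdef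
  have hcpos : 0 < c := by
    apply mul_pos
    · exact Real.rpow_pos_of_pos (by positivity) _
    · exact Real.rpow_pos_of_pos hδpos _
  have hfreq : ∃ᶠ m in Filter.atTop, c ≤ G.qv m xs xs ^ ((m:ℝ)⁻¹) := by
    rw [Filter.frequently_atTop]
    intro a
    refine ⟨(a + 1) * nc, ?_, ?_⟩
    · have : a + 1 ≤ (a + 1) * nc := Nat.le_mul_of_pos_right _ hn
      omega
    · set k := a + 1 with hk
      have hk0 : 0 < k := by omega
      have hm0 : (0:ℝ) < ((k * nc : ℕ):ℝ) := by
        have : 0 < k * nc := Nat.mul_pos hk0 hn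
        exact_mod_cast this
      have hb0 : (0:ℝ) ≤ (1 / (G.deg xs : ℝ)) * δ ^ k := by positivity
      have h1 : ((1 / (G.deg xs : ℝ)) * δ ^ k) ^ (((k * nc : ℕ):ℝ)⁻¹) ≤
          G.qv (k * nc) xs xs ^ (((k * nc : ℕ):ℝ)⁻¹) :=
        Real.rpow_le_rpow hb0 (hqvlow k) (by positivity)
      refine le_trans ?_ h1
      rw [Real.mul_rpow (by positivity) (by positivity)]
      have hsplit : ((δ : ℝ) ^ k) ^ (((k * nc : ℕ):ℝ)⁻¹) = δ ^ ((nc : ℝ)⁻¹) := by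
        rw [← Real.rpow_natCast δ k, ← Real.rpow_mul (le_of_lt hδpos)]
        congr 1
        have hkr : ((k:ℕ):ℝ) ≠ 0 := by positivity
        have hncr : ((nc:ℕ):ℝ) ≠ 0 := by
          have : (0:ℝ) < ((nc:ℕ):ℝ) := by exact_mod_cast hn
          exact ne_of_gt this
        push_cast
        field_simp
      rw [hsplit]
      apply mul_le_mul_of_nonneg_right _ (le_of_lt (Real.rpow_pos_of_pos hδpos _))
      apply Real.rpow_le_rpow_of_exponent_ge (by positivity) hDs1
      rw [inv_le_inv₀ hm0 (by exact_mod_cast hn)]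
      have h9 : nc ≤ k * nc := by
        calc nc = 1 * nc := (one_mul nc).symm
          _ ≤ k * nc := Nat.mul_le_mul_right nc hk0
      exact_mod_cast h9
  have hbdd : Filter.IsBoundedUnder (· ≤ ·) Filter.atTop
      (fun m : ℕ => G.qv m xs xs ^ ((m:ℝ)⁻¹)) :=
    Filter.isBoundedUnder_of ⟨1, fun m =>
      Real.rpow_le_one (qv_nonneg hdeg m xs xs) (qv_le_one hdeg m xs xs) (by positivity)⟩
  have hLxs : c ≤ L xs xs := Filter.le_limsup_of_frequently_le hfreq hbdd
  -- assemble
  refine ⟨L x₀ x₀, ?_, ?_, ?_⟩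
  · exact lt_of_lt_of_le (lt_of_lt_of_le hcpos hLxs) (hLE xs xs x₀ x₀)
  · have hcob : Filter.IsCoboundedUnder (· ≤ ·) Filter.atTop
        (fun n : ℕ => G.qv n x₀ x₀ ^ ((n:ℝ)⁻¹)) := by
      apply Filter.IsBoundedUnder.isCoboundedUnder_le
      exact Filter.isBoundedUnder_of ⟨0, fun m => Real.rpow_nonneg (qv_nonneg hdeg m x₀ x₀) _⟩
    exact Filter.limsup_le_of_le hcob (Filter.Eventually.of_forall (fun m =>
      Real.rpow_le_one (qv_nonneg hdeg m x₀ x₀) (qv_le_one hdeg m x₀ x₀) (by positivity)))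
  · intro x y
    exact le_antisymm (hLE x y x₀ x₀) (hLE x₀ x₀ x y)
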